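/- arXiv:1002.1886 — 2 statements merged into one kernel-verified Lean document; each statement's English description precedes it below -/
import Mathlib

section
/- Let G be a finite abelian group, δ ∈ (0,1], l ≥ 2 an integer, Λ ⊆ Ĝ dissociated, and S ⊆ G with |S| = δ|G|. Then ∑_{ξ∈Λ} |Ŝ(ξ)|^{l+1} ≤ C₂ |S| (∑_{ξ≠0} |Ŝ(ξ)|^{2l})^{1/2} · log^{1/2}(1/δ) for an absolute constant C₂ > 0. -/
set_option maxHeartbeats 1600000

open Finset Real

lemma exp_le_cosh_add {R t : ℝ} (h : |t| ≤ R) :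
    Real.exp t ≤ Real.cosh R + Real.sinh R / R * t := by
  rcases eq_or_lt_of_le ((abs_nonneg t).trans h) with hR | hR
  · have ht : t = 0 := by
      have h0 : |t| ≤ 0 := by rw [hR]; exact h
      simpa using le_antisymm h0 (abs_nonneg t)
    simp [ht, ← hR]
  · have hab := abs_le.1 h
    have ha : (0:ℝ) ≤ (R + t) / (2 * R) := by
      apply div_nonneg <;> linarith
    have hb : (0:ℝ) ≤ (R - t) / (2 * R) := by
      apply div_nonneg <;> linarith
    have hsum : (R - t) / (2 * R) + (R + t) / (2 * R) = 1 := by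
      field_simp; ring
    have key := convexOn_exp.2 (Set.mem_univ (-R)) (Set.mem_univ R) hb ha hsum
    have hc : ((R - t) / (2 * R)) • (-R) + ((R + t) / (2 * R)) • R = t := by
      simp only [smul_eq_mul]
      field_simp
      ring
    rw [hc] at key
    calc Real.exp t ≤ ((R - t)/(2*R)) • Real.exp (-R) + ((R + t)/(2*R)) • Real.exp R := key
      _ = Real.cosh R + Real.sinh R / R * t := by
          rw [Real.cosh_eq, Real.sinh_eq]; simp only [smul_eq_mul]; field_simp; ring

open Finset Real
open scoped BigOperators ComplexConjugate
variable {G : Type} [AddCommGroup G] [Fintype G]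

lemma abs_addChar_apply (ψ : AddChar G ℂ) (a : G) : ‖ψ a‖ = 1 := by
  exact ψ.norm_apply a

lemma rudin_exp (d : AddChar G ℂ → ℂ) (h : AddDissociated {ψ | d ψ ≠ 0}) :
    𝔼 a, Real.exp (∑ ψ, (d ψ * ψ a).re) ≤ Real.exp (∑ ψ, ‖d ψ‖ ^ 2 / 2) := by
  classical
  set d' : AddChar G ℂ → ℂ := fun ψ =>
    ((Real.sinh (‖d ψ‖) / ‖d ψ‖ : ℝ) : ℂ) * d ψ with hd'
  have hsupp : {ψ | d' ψ ≠ 0} ⊆ {ψ | d ψ ≠ 0} := by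
    intro ψ hψ; simp only [Set.mem_setOf_eq, hd'] at hψ ⊢
    intro h0; apply hψ; rw [h0]; ring
  have key : ∀ a : G, ∀ ψ : AddChar G ℂ,
      Real.exp ((d ψ * ψ a).re) ≤ Real.cosh (‖d ψ‖) + (d' ψ * ψ a).re := by
    intro a ψ
    have habs : |(d ψ * ψ a).re| ≤ ‖d ψ‖ := by
      calc |(d ψ * ψ a).re| ≤ ‖d ψ * ψ a‖ := Complex.abs_re_le_norm _
        _ = ‖d ψ‖ := by rw [norm_mul, abs_addChar_apply, mul_one]
    refine (exp_le_cosh_add habs).trans (le_of_eq ?_)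
    congr 1
    rw [hd', mul_assoc, Complex.re_ofReal_mul]
  calc 𝔼 a, Real.exp (∑ ψ, (d ψ * ψ a).re)
      = 𝔼 a, ∏ ψ, Real.exp ((d ψ * ψ a).re) := by
        simp_rw [Real.exp_sum]
    _ ≤ 𝔼 a, ∏ ψ, (Real.cosh (‖d ψ‖) + (d' ψ * ψ a).re) := by
        refine Finset.expect_le_expect fun a _ => ?_
        exact Finset.prod_le_prod (fun ψ _ => (Real.exp_pos _).le) (fun ψ _ => key a ψ)
    _ = ∏ ψ, Real.cosh (‖d ψ‖) :=
        AddDissociated.randomisation _ _ (h.subset hsupp)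
    _ ≤ ∏ ψ, Real.exp (‖d ψ‖ ^ 2 / 2) :=
        Finset.prod_le_prod (fun ψ _ => (Real.cosh_pos _).le)
          (fun ψ _ => Real.cosh_le_exp_half_sq _)
    _ = Real.exp (∑ ψ, ‖d ψ‖ ^ 2 / 2) := (Real.exp_sum _ _).symm


lemma AddChar.map_finset_sum {G ι : Type} [AddCommGroup G] [Fintype G]
    (e : AddChar G (AddChar G ℂ)) (t : Finset ι) (f : ι → G) :
    e (∑ x ∈ t, f x) = ∑ x ∈ t, e (f x) := by
  classical
  induction t using Finset.induction with
  | empty => simp [AddChar.map_zero_eq_one]; rfl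
  | insert a s h ih =>
      rw [Finset.sum_insert h, Finset.sum_insert h, AddChar.map_add_eq_mul, ih]; rfl

lemma addDissociated_zero_not_mem {G : Type} [AddCommGroup G] {Λ : Finset G}
    (hΛ : AddDissociated (Λ : Set G)) (h0 : (0:G) ∈ Λ) : False := by
  have h1 : ↑({0} : Finset G) ⊆ (Λ : Set G) := by simpa using h0
  have h2 : ↑(∅ : Finset G) ⊆ (Λ : Set G) := by simp
  have := hΛ h1 h2 (by simp)
  simpa using this

lemma addDissociated_image {G : Type} [AddCommGroup G] [Fintype G] [DecidableEq G]
    (e : AddChar G (AddChar G ℂ)) (he : Function.Injective e) {Λ : Finset G}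
    (hΛ : AddDissociated (Λ : Set G)) :
    AddDissociated ((fun ξ : G => e (-ξ)) '' (Λ : Set G)) := by
  classical
  set m : G → AddChar G ℂ := fun ξ => e (-ξ) with hm_def
  have hm : Function.Injective m := fun a b hab => neg_injective (he hab)
  intro t ht u hu htu
  have repr : ∀ v : Finset (AddChar G ℂ), ↑v ⊆ (fun ξ : G => e (-ξ)) '' (Λ : Set G) →
      ∃ v₀ : Finset G, ↑v₀ ⊆ (Λ : Set G) ∧ v = v₀.image m := by
    intro v hv
    refine ⟨Λ.filter (fun ξ => m ξ ∈ v), by exact_mod_cast Finset.coe_subset.2 (Finset.filter_subset _ _), ?_⟩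
    ext ψ
    simp only [Finset.mem_image, Finset.mem_filter]
    constructor
    · intro hψ
      obtain ⟨ξ, hξ, rfl⟩ := hv hψ
      exact ⟨ξ, ⟨hξ, hψ⟩, rfl⟩
    · rintro ⟨ξ, ⟨-, hξv⟩, rfl⟩; exact hξv
  obtain ⟨t₀, ht₀, rfl⟩ := repr t ht
  obtain ⟨u₀, hu₀, rfl⟩ := repr u hu
  have hsum : ∀ v₀ : Finset G, ∑ ψ ∈ v₀.image m, ψ = m (∑ ξ ∈ v₀, ξ) := by
    intro v₀
    rw [Finset.sum_image (fun a _ b _ hab => hm hab)]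
    show _ = e (-∑ ξ ∈ v₀, ξ)
    have hneg : -∑ ξ ∈ v₀, ξ = ∑ ξ ∈ v₀, -ξ := by
      rw [← Finset.sum_neg_distrib]
    rw [hneg, AddChar.map_finset_sum]
  have htu' : ∑ ψ ∈ t₀.image m, ψ = ∑ ψ ∈ u₀.image m, ψ := htu
  rw [hsum, hsum] at htu'
  have := hΛ ht₀ hu₀ (neg_injective (he htu'))
  rw [this]



/-- Generalization of Chang's theorem: if `Λ` is dissociated, `|S| = δ|G|` and `l ≥ 2`, then
`∑_{ξ∈Λ} |Ŝ(ξ)|^{l+1} ≤ C₂ |S| (∑_{ξ≠0} |Ŝ(ξ)|^{2l})^{1/2} log^{1/2}(1/δ)` (log base 2). -/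
theorem chang_generalization :
    ∃ C₂ : ℝ, 0 < C₂ ∧
      ∀ (G : Type) [AddCommGroup G] [Fintype G] [DecidableEq G]
        (e : AddChar G (AddChar G ℂ)) (_ : Function.Injective e)
        (δ : ℝ) (_ : 0 < δ) (_ : δ ≤ 1)
        (l : ℕ) (_ : 2 ≤ l)
        (Λ : Finset G) (_ : AddDissociated (Λ : Set G))
        (S : Finset G) (_ : (S.card : ℝ) = δ * Fintype.card G),
        ∑ ξ ∈ Λ, ‖∑ x ∈ S, e (-ξ) x‖ ^ (l + 1) ≤
          C₂ * (S.card : ℝ) *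
            Real.sqrt (∑ ξ ∈ Finset.univ.filter (fun ξ : G => ξ ≠ 0),
                ‖∑ x ∈ S, e (-ξ) x‖ ^ (2 * l)) *
            Real.sqrt (Real.logb 2 (1 / δ)) := by
  classical
  refine ⟨2, two_pos, ?_⟩
  intro G _ _ _ e he δ hδ0 hδ1 l hl Λ hΛ S hS
  set m : G → AddChar G ℂ := fun ξ => e (-ξ) with hm_def
  have hm : Function.Injective m := fun a b hab => neg_injective (he hab)
  set Sh : G → ℂ := fun ξ => ∑ x ∈ S, m ξ x with hSh_def
  set A : G → ℝ := fun ξ => ‖Sh ξ‖ with hA_def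
  set n : ℝ := (S.card : ℝ) with hn_def
  have hGpos : (0:ℝ) < Fintype.card G := by exact_mod_cast Fintype.card_pos
  have hn : 0 < n := by rw [hS]; exact mul_pos hδ0 hGpos
  set T : ℝ := ∑ ξ ∈ Λ, A ξ ^ 2 with hT_def
  have hT0 : 0 ≤ T := Finset.sum_nonneg fun ξ _ => by positivity
  set c : G → ℂ := fun ξ => ((n)⁻¹ : ℝ) * (starRingEnd ℂ) (Sh ξ) with hc_def
  set d : AddChar G ℂ → ℂ := fun ψ => ∑ ξ ∈ Λ, if m ξ = ψ then c ξ else 0 with hd_def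
  have hd_eq : ∀ ξ ∈ Λ, d (m ξ) = c ξ := by
    intro ξ hξ
    simp only [hd_def]
    rw [Finset.sum_eq_single_of_mem ξ hξ
      (fun b hb hbξ => if_neg fun hc => hbξ (hm hc))]
    rw [if_pos rfl]
  have hd_zero : ∀ ψ, ψ ∉ Λ.image m → d ψ = 0 := by
    intro ψ hψ
    simp only [hd_def]
    refine Finset.sum_eq_zero fun ξ hξ => if_neg fun hc => hψ ?_
    rw [← hc]; exact Finset.mem_image_of_mem m hξ
  have hdiss : AddDissociated {ψ | d ψ ≠ 0} := by
    refine (addDissociated_image e he hΛ).subset ?_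
    intro ψ hψ
    by_contra hmem
    exact hψ (hd_zero ψ (by simpa [Finset.mem_image, Set.mem_image] using hmem))
  -- the ℓ² mass of d
  have hd2 : ∑ ψ, ‖d ψ‖ ^ 2 = n⁻¹ ^ 2 * T := by
    rw [← Finset.sum_subset (Finset.subset_univ (Λ.image m))
      (fun ψ _ hψ => by rw [hd_zero ψ hψ]; simp)]
    rw [Finset.sum_image (fun a _ b _ hab => hm hab)]
    rw [hT_def, Finset.mul_sum]
    refine Finset.sum_congr rfl fun ξ hξ => ?_
    rw [hd_eq ξ hξ, hc_def]
    simp only [norm_mul, Complex.norm_conj, Complex.norm_real, Real.norm_eq_abs]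
    rw [mul_pow, hA_def]
    congr 1
    rw [abs_of_nonneg (by positivity)]
  -- pointwise identification of the Riesz-type function
  have hF : ∀ a : G, (∑ ψ, d ψ * ψ a) = ∑ ξ ∈ Λ, c ξ * m ξ a := by
    intro a
    simp only [hd_def, Finset.sum_mul, ite_mul, zero_mul]
    rw [Finset.sum_comm]
    refine Finset.sum_congr rfl fun ξ _ => ?_
    rw [Finset.sum_ite_eq Finset.univ (m ξ) (fun ψ => c ξ * ψ a)]
    simp
  -- sum over S of the real parts equals n⁻¹ * T
  have hTS : ∑ x ∈ S, (∑ ψ, (d ψ * ψ x).re) = n⁻¹ * T := by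
    have h1 : ∀ x : G, (∑ ψ, (d ψ * ψ x).re) = (∑ ψ, d ψ * ψ x).re := fun x =>
      (Complex.re_sum _ _).symm
    simp_rw [h1, hF, ← Complex.re_sum]
    have h2 : ∑ x ∈ S, ∑ ξ ∈ Λ, c ξ * m ξ x = ((n⁻¹ * T : ℝ) : ℂ) := by
      rw [Finset.sum_comm]
      have h3 : ∀ ξ ∈ Λ, ∑ x ∈ S, c ξ * m ξ x = ((n⁻¹ * A ξ ^ 2 : ℝ) : ℂ) := by
        intro ξ _
        rw [← Finset.mul_sum]
        show c ξ * Sh ξ = _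
        simp only [hc_def, hA_def]
        rw [mul_assoc, mul_comm ((starRingEnd ℂ) (Sh ξ)) (Sh ξ), Complex.mul_conj,
          Complex.normSq_eq_norm_sq]
        push_cast
        ring
      rw [Finset.sum_congr rfl h3]
      rw [hT_def]
      push_cast
      rw [Finset.mul_sum]
    rw [h2, Complex.ofReal_re]
  -- Jensen's inequality over S
  have hw : ∑ _x ∈ S, (n⁻¹ : ℝ) = 1 := by
    rw [Finset.sum_const, nsmul_eq_mul]
    field_simp
    exact hn_def.symm
  have hJen : Real.exp (n⁻¹ * (n⁻¹ * T)) ≤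
      ∑ x ∈ S, n⁻¹ * Real.exp (∑ ψ, (d ψ * ψ x).re) := by
    have hjen := convexOn_exp.map_sum_le (t := S) (w := fun _ => (n⁻¹ : ℝ))
      (p := fun x => ∑ ψ, (d ψ * ψ x).re)
      (fun _ _ => by positivity) hw (fun _ _ => Set.mem_univ _)
    simp only [smul_eq_mul] at hjen
    rw [← Finset.mul_sum, hTS] at hjen
    exact hjen
  -- extend to all of G and apply Rudin
  have hRud : ∑ x : G, Real.exp (∑ ψ, (d ψ * ψ x).re) ≤
      (Fintype.card G : ℝ) * Real.exp (n⁻¹ ^ 2 * T / 2) := by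
    have h1 := rudin_exp d hdiss
    rw [Finset.expect_eq_sum_div_card, Finset.card_univ] at h1
    have h2 : ∑ ψ, ‖d ψ‖ ^ 2 / 2 = n⁻¹ ^ 2 * T / 2 := by
      rw [← Finset.sum_div, hd2]
    rw [h2] at h1
    rw [div_le_iff₀ hGpos] at h1
    linarith [h1]
  have hchain : Real.exp (n⁻¹ * (n⁻¹ * T)) ≤ δ⁻¹ * Real.exp (n⁻¹ ^ 2 * T / 2) := by
    have h1 : ∑ x ∈ S, n⁻¹ * Real.exp (∑ ψ, (d ψ * ψ x).re) ≤
        n⁻¹ * ∑ x : G, Real.exp (∑ ψ, (d ψ * ψ x).re) := by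
      rw [← Finset.mul_sum]
      refine mul_le_mul_of_nonneg_left ?_ (by positivity)
      exact Finset.sum_le_sum_of_subset_of_nonneg (Finset.subset_univ S)
        (fun _ _ _ => (Real.exp_pos _).le)
    have h2 : n⁻¹ * ((Fintype.card G : ℝ) * Real.exp (n⁻¹ ^ 2 * T / 2)) =
        δ⁻¹ * Real.exp (n⁻¹ ^ 2 * T / 2) := by
      have : n⁻¹ * (Fintype.card G : ℝ) = δ⁻¹ := by
        rw [hS]; field_simp
      rw [← mul_assoc, this]
    calc Real.exp (n⁻¹ * (n⁻¹ * T))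
        ≤ ∑ x ∈ S, n⁻¹ * Real.exp (∑ ψ, (d ψ * ψ x).re) := hJen
      _ ≤ n⁻¹ * ∑ x : G, Real.exp (∑ ψ, (d ψ * ψ x).re) := h1
      _ ≤ n⁻¹ * ((Fintype.card G : ℝ) * Real.exp (n⁻¹ ^ 2 * T / 2)) :=
          mul_le_mul_of_nonneg_left hRud (inv_nonneg.2 hn.le)
      _ = δ⁻¹ * Real.exp (n⁻¹ ^ 2 * T / 2) := h2
  -- Chang's energy bound
  have hexp : Real.exp (T / (2 * n ^ 2)) ≤ δ⁻¹ := by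
    have hsplit : n⁻¹ * (n⁻¹ * T) = n⁻¹ ^ 2 * T / 2 + T / (2 * n ^ 2) := by
      field_simp
      ring
    rw [hsplit, Real.exp_add] at hchain
    have hpos := Real.exp_pos (n⁻¹ ^ 2 * T / 2)
    rw [mul_comm (δ⁻¹)] at hchain
    exact le_of_mul_le_mul_left hchain hpos
  have hChang : T ≤ 2 * n ^ 2 * Real.log (1 / δ) := by
    have h1 : T / (2 * n ^ 2) ≤ Real.log (1 / δ) := by
      rw [Real.le_log_iff_exp_le (by positivity)]
      rw [one_div]
      exact hexp
    calc T = 2 * n ^ 2 * (T / (2 * n ^ 2)) := by field_simp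
      _ ≤ 2 * n ^ 2 * Real.log (1 / δ) :=
          mul_le_mul_of_nonneg_left h1 (by positivity)
  -- final assembly via Cauchy–Schwarz
  have h0Λ : ∀ ξ ∈ Λ, ξ ≠ 0 := fun ξ hξ h =>
    addDissociated_zero_not_mem hΛ (h ▸ hξ)
  set B' : ℝ := ∑ ξ ∈ Finset.univ.filter (fun ξ : G => ξ ≠ 0), A ξ ^ (2 * l) with hB'_def
  have hB'0 : 0 ≤ B' := Finset.sum_nonneg fun ξ _ => by positivity
  have hB : ∑ ξ ∈ Λ, A ξ ^ (2 * l) ≤ B' :=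
    Finset.sum_le_sum_of_subset_of_nonneg
      (fun ξ hξ => Finset.mem_filter.2 ⟨Finset.mem_univ _, h0Λ ξ hξ⟩)
      (fun ξ _ _ => by positivity)
  have hCS : (∑ ξ ∈ Λ, A ξ ^ (l + 1)) ^ 2 ≤ T * ∑ ξ ∈ Λ, A ξ ^ (2 * l) := by
    have hcs := Finset.sum_mul_sq_le_sq_mul_sq Λ A (fun ξ => A ξ ^ l)
    have e1 : ∀ ξ : G, A ξ * A ξ ^ l = A ξ ^ (l + 1) := fun ξ => (pow_succ' (A ξ) l).symm
    have e2 : ∀ ξ : G, (A ξ ^ l) ^ 2 = A ξ ^ (2 * l) := fun ξ => by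
      rw [← pow_mul, mul_comm]
    simp only [e1, e2] at hcs
    exact hcs
  have hlogb0 : 0 ≤ Real.logb 2 (1 / δ) :=
    Real.logb_nonneg one_lt_two (one_le_one_div hδ0 hδ1)
  have hlog_eq : Real.log (1 / δ) = Real.log 2 * Real.logb 2 (1 / δ) := by
    rw [Real.logb]
    field_simp
  have hlog2 : Real.log 2 ≤ 1 := by
    have := Real.log_le_sub_one_of_pos (by norm_num : (0:ℝ) < 2)
    linarith
  have hL0 : 0 ≤ ∑ ξ ∈ Λ, A ξ ^ (l + 1) := Finset.sum_nonneg fun ξ _ => by positivity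
  have hRHS0 : 0 ≤ 2 * n * Real.sqrt B' * Real.sqrt (Real.logb 2 (1 / δ)) := by positivity
  have hsq : (∑ ξ ∈ Λ, A ξ ^ (l + 1)) ^ 2 ≤
      (2 * n * Real.sqrt B' * Real.sqrt (Real.logb 2 (1 / δ))) ^ 2 := by
    have hRHSsq : (2 * n * Real.sqrt B' * Real.sqrt (Real.logb 2 (1 / δ))) ^ 2 =
        4 * n ^ 2 * B' * Real.logb 2 (1 / δ) := by
      rw [mul_pow, mul_pow, mul_pow, Real.sq_sqrt hB'0, Real.sq_sqrt hlogb0]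
      ring
    rw [hRHSsq]
    calc (∑ ξ ∈ Λ, A ξ ^ (l + 1)) ^ 2 ≤ T * ∑ ξ ∈ Λ, A ξ ^ (2 * l) := hCS
      _ ≤ T * B' := mul_le_mul_of_nonneg_left hB hT0
      _ ≤ (2 * n ^ 2 * Real.log (1 / δ)) * B' := mul_le_mul_of_nonneg_right hChang hB'0
      _ = (2 * Real.log 2) * (n ^ 2 * B' * Real.logb 2 (1 / δ)) := by
          rw [hlog_eq]; ring
      _ ≤ 4 * n ^ 2 * B' * Real.logb 2 (1 / δ) := by
          have hfac : 0 ≤ n ^ 2 * B' * Real.logb 2 (1 / δ) := by positivity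
          nlinarith
  have final : ∑ ξ ∈ Λ, A ξ ^ (l + 1) ≤
      2 * n * Real.sqrt B' * Real.sqrt (Real.logb 2 (1 / δ)) :=
    calc ∑ ξ ∈ Λ, A ξ ^ (l + 1)
        = Real.sqrt ((∑ ξ ∈ Λ, A ξ ^ (l + 1)) ^ 2) := (Real.sqrt_sq hL0).symm
      _ ≤ Real.sqrt ((2 * n * Real.sqrt B' * Real.sqrt (Real.logb 2 (1 / δ))) ^ 2) :=
          Real.sqrt_le_sqrt hsq
      _ = 2 * n * Real.sqrt B' * Real.sqrt (Real.logb 2 (1 / δ)) := Real.sqrt_sq hRHS0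
  simpa only [hB'_def, hA_def, hSh_def, hm_def, hn_def] using final
end

section
/- Let p be prime, S ⊆ ℤ/pℤ nonempty, and ψ : ℤ/pℤ → ℂ an arbitrary function. Then the dimension of the linear space L*(S) = {f : f(x) = ψ(x)a(x) for some a with supp â ⊆ S} equals min{|S|, |supp ψ|}. -/
set_option synthInstance.maxHeartbeats 1000000
set_option maxHeartbeats 1000000

open Polynomial

lemma lemA (p : ℕ) [hp : Fact p.Prime] :
    ∀ n : ℕ, ∀ f : (ZMod p)[X], f ≠ 0 → f.natDegree < p → f.support.card ≤ n →
      ¬ ((X - 1 : (ZMod p)[X]) ^ n ∣ f) := by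
  intro n
  induction n with
  | zero =>
    intro f hf _ hcard _
    exact hf (Polynomial.support_eq_empty.mp (Finset.card_eq_zero.mp (Nat.le_zero.mp hcard)))
  | succ n ih =>
    intro f hf hdeg hcard hdvd
    set k := f.natTrailingDegree with hk
    have hXk : (X : (ZMod p)[X]) ^ k ∣ f := by
      rw [Polynomial.X_pow_dvd_iff]
      intro d hd
      exact Polynomial.coeff_eq_zero_of_lt_natTrailingDegree hd
    obtain ⟨g, hg⟩ := hXk
    have hgne : g ≠ 0 := by rintro rfl; simp at hg; exact hf hg
    have hg' : f = g * X ^ k := by rw [hg]; ring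
    have hg0 : g.coeff 0 ≠ 0 := by
      have h1 : f.coeff k = g.coeff 0 := by
        rw [hg']
        simpa using Polynomial.coeff_mul_X_pow g k 0
      rw [← h1]
      exact Polynomial.trailingCoeff_nonzero_iff_nonzero.mpr hf
    have hXkne : (X : (ZMod p)[X]) ^ k ≠ 0 := pow_ne_zero _ Polynomial.X_ne_zero
    have hgdeg : g.natDegree < p := by
      have : f.natDegree = g.natDegree + k := by
        rw [hg', Polynomial.natDegree_mul hgne hXkne, Polynomial.natDegree_X_pow]
      omega
    have hsupp : g.support.card ≤ n + 1 := by
      refine le_trans (Finset.card_le_card_of_injOn (· + k) ?_ ?_) hcard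
      · intro j hj
        simp only [Finset.mem_coe, Polynomial.mem_support_iff] at hj ⊢
        rw [hg']
        rwa [Polynomial.coeff_mul_X_pow]
      · intro a _ b _ h
        simpa using h
    have hco : IsCoprime ((X - 1 : (ZMod p)[X]) ^ (n + 1)) (X ^ k) := by
      apply IsCoprime.pow
      exact ⟨-1, 1, by ring⟩
    have hdvdg : (X - 1 : (ZMod p)[X]) ^ (n + 1) ∣ g := hco.dvd_of_dvd_mul_right (hg' ▸ hdvd)
    by_cases hD : derivative g = 0
    · -- then g is a nonzero constant, contradiction with divisibility
      have hgdeg0 : g.natDegree = 0 := by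
        by_contra hd0
        have h1 : g.coeff g.natDegree * ((g.natDegree : ℕ) : ZMod p) = 0 := by
          have h2 := Polynomial.coeff_derivative g (g.natDegree - 1)
          rw [hD] at h2
          simp only [Polynomial.coeff_zero] at h2
          have h3 : g.natDegree - 1 + 1 = g.natDegree := by omega
          have hc : ((g.natDegree - 1 : ℕ) : ZMod p) + 1 = ((g.natDegree : ℕ) : ZMod p) := by
            conv_rhs => rw [← h3]
            push_cast
            ring
          rw [hc, h3] at h2
          exact h2.symm
        have h4 : ((g.natDegree : ℕ) : ZMod p) ≠ 0 := by
          rw [Ne, ZMod.natCast_eq_zero_iff]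
          intro hdvd'
          have := Nat.le_of_dvd (by omega) hdvd'
          omega
        have := mul_eq_zero.mp h1
        rcases this with h | h
        · exact Polynomial.leadingCoeff_ne_zero.mpr hgne h
        · exact h4 h
      have hgC : g = C (g.coeff 0) := Polynomial.eq_C_of_natDegree_eq_zero hgdeg0
      have : (n + 1 : ℕ) ≤ 0 := by
        have hCne : (C (g.coeff 0) : (ZMod p)[X]) ≠ 0 := by
          rw [Ne, Polynomial.C_eq_zero]; exact hg0
        have h6 := Polynomial.natDegree_le_of_dvd (hgC ▸ hdvdg) hCne
        have h7 : ((X - 1 : (ZMod p)[X])).natDegree = 1 := by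
          have := Polynomial.natDegree_X_sub_C (x := (1 : ZMod p))
          simpa using this
        rw [Polynomial.natDegree_pow, h7, Polynomial.natDegree_C] at h6
        omega
      omega
    · -- inductive step on h = X * derivative g
      set h := (X : (ZMod p)[X]) * derivative g with hhdef
      have hhne : h ≠ 0 := mul_ne_zero Polynomial.X_ne_zero hD
      have hhdeg : h.natDegree < p := by
        have h1 : h.natDegree = 1 + (derivative g).natDegree := by
          rw [hhdef, Polynomial.natDegree_mul Polynomial.X_ne_zero hD, Polynomial.natDegree_X]
        have hgd0 : g.natDegree ≠ 0 := by
          intro h0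
          exact hD (by rw [Polynomial.eq_C_of_natDegree_eq_zero h0]; simp)
        have h2 := Polynomial.natDegree_derivative_lt hgd0
        omega
      have hhsupp : h.support ⊆ g.support.erase 0 := by
        intro j hj
        rw [Polynomial.mem_support_iff] at hj
        have hj0 : j ≠ 0 := by
          intro h0
          apply hj
          rw [h0, hhdef, Polynomial.mul_coeff_zero]
          simp
        have hcoeff : h.coeff j = g.coeff j * (j : ZMod p) := by
          have h5 : j - 1 + 1 = j := by omega
          rw [hhdef]
          rw [show j = (j-1) + 1 by omega, Polynomial.coeff_X_mul,
            Polynomial.coeff_derivative]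
          have hc : ((j - 1 : ℕ) : ZMod p) + 1 = ((j : ℕ) : ZMod p) := by
            conv_rhs => rw [← h5]
            push_cast
            ring
          rw [hc, h5]
        rw [Finset.mem_erase, Polynomial.mem_support_iff]
        refine ⟨hj0, fun h0 => hj ?_⟩
        rw [hcoeff, h0, zero_mul]
      have hhcard : h.support.card ≤ n := by
        have h1 : (g.support.erase 0).card = g.support.card - 1 := by
          rw [Finset.card_erase_of_mem (Polynomial.mem_support_iff.mpr hg0)]
        have h2 : 1 ≤ g.support.card := Finset.card_pos.mpr ⟨0, Polynomial.mem_support_iff.mpr hg0⟩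
        have := Finset.card_le_card hhsupp
        omega
      have hhdvd : (X - 1 : (ZMod p)[X]) ^ n ∣ h := by
        obtain ⟨q, hq⟩ := hdvdg
        refine Dvd.dvd.mul_left ?_ X
        rw [hq, Polynomial.derivative_mul, Polynomial.derivative_pow]
        simp only [Polynomial.derivative_sub, Polynomial.derivative_X, Polynomial.derivative_one,
          sub_zero, mul_one]
        have hn1 : n + 1 - 1 = n := by omega
        rw [hn1]
        exact dvd_add (Dvd.dvd.mul_right (dvd_mul_left _ _) q)
          (Dvd.dvd.mul_right (pow_dvd_pow _ (Nat.le_succ n)) _)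
      exact ih h hhne hhdeg hhcard hhdvd

theorem cheb {p : ℕ} [hp : Fact p.Prime] {n : ℕ} (x ξ : Fin n → ZMod p)
    (hx : Function.Injective x) (hξ : Function.Injective ξ)
    {ω : ℂ} (hω : IsPrimitiveRoot ω p) :
    (Matrix.of fun i j : Fin n => ω ^ ((x i).val * (ξ j).val)).det ≠ 0 := by
  classical
  have hppos : 0 < p := hp.out.pos
  have hp1 : 1 < p := hp.out.one_lt
  have hωp : ω ^ p = 1 := hω.pow_eq_one
  have hint : IsIntegral ℤ ω := by
    refine ⟨X ^ p - 1, ?_, ?_⟩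
    · simpa using monic_X_pow_sub_C (1 : ℤ) hppos.ne'
    · simp [eval₂_sub, hωp]
  have hintQ : IsIntegral ℚ ω := hint.tower_top
  intro hdet
  -- move to the intermediate field F = ℚ(ω)
  set F := IntermediateField.adjoin ℚ ({ω} : Set ℂ) with hF
  have hωF : ω ∈ F := IntermediateField.mem_adjoin_simple_self ℚ ω
  set ωF : F := ⟨ω, hωF⟩ with hωFdef
  set MF : Matrix (Fin n) (Fin n) F := Matrix.of fun i j => ωF ^ ((x i).val * (ξ j).val) with hMF
  have hdetF : MF.det = 0 := by
    have hmap : (MF.map (algebraMap F ℂ)) = Matrix.of fun i j : Fin n => ω ^ ((x i).val * (ξ j).val) := by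
      ext i j
      simp [hMF, hωFdef]
    have h3 := (RingHom.map_det (algebraMap F ℂ) MF).symm
    rw [RingHom.mapMatrix_apply, hmap, hdet] at h3
    exact (_root_.map_eq_zero _).mp h3.symm
  obtain ⟨c, hc0, hMc⟩ := (Matrix.exists_mulVec_eq_zero_iff).mpr hdetF
  -- kernel relation over ℂ
  have hker : ∀ i, ∑ j, ω ^ ((x i).val * (ξ j).val) * (c j : ℂ) = 0 := by
    intro i
    have := congrFun hMc i
    have h2 : ((MF.mulVec c) i : ℂ) = ∑ j, ω ^ ((x i).val * (ξ j).val) * (c j : ℂ) := by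
      simp [Matrix.mulVec, dotProduct, hMF, hωFdef]
    rw [this] at h2
    simpa using h2.symm
  -- represent c j as rational polynomial in ω
  have hrep : ∀ j, ∃ P : ℚ[X], aeval ω P = (c j : ℂ) := by
    intro j
    have h1 : (c j : ℂ) ∈ F := (c j).2
    rw [← IntermediateField.mem_toSubalgebra,
      IntermediateField.adjoin_simple_toSubalgebra_of_isAlgebraic hintQ.isAlgebraic,
      Algebra.adjoin_singleton_eq_range_aeval] at h1
    obtain ⟨P, hP⟩ := h1
    exact ⟨P, hP⟩
  choose P hP using hrep
  -- clear denominators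
  have hclear : ∀ j, ∃ (Q : ℤ[X]) (b : ℤ), b ≠ 0 ∧ Q.map (Int.castRingHom ℚ) = b • P j := by
    intro j
    obtain ⟨b, hb⟩ := IsLocalization.integerNormalization_map_to_map (nonZeroDivisors ℤ) (P j)
    exact ⟨_, b, nonZeroDivisors.coe_ne_zero b, hb⟩
  choose Q b hb hQ using hclear
  -- aeval of Q j at ω equals b j * c j
  have haQ : ∀ j, aeval ω (Q j) = (b j : ℂ) * (c j : ℂ) := by
    intro j
    have h1 : aeval ω ((Q j).map (Int.castRingHom ℚ)) = aeval ω (Q j) := by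
      rw [← algebraMap_int_eq, Polynomial.aeval_map_algebraMap]
    rw [← h1, hQ j, map_zsmul, hP j, zsmul_eq_mul]
  -- pass to the subring A = ℤ[ω]
  set A := Algebra.adjoin ℤ ({ω} : Set ℂ) with hA
  have hωA : ω ∈ A := Algebra.self_mem_adjoin_singleton ℤ ω
  set ωA : A := ⟨ω, hωA⟩ with hωAdef
  have hcoeaeval : ∀ E : ℤ[X], ((aeval ωA E : A) : ℂ) = aeval ω E := fun E =>
    (Polynomial.aeval_algHom_apply A.val ωA E).symm
  have hsurj : Function.Surjective ((aeval ωA : ℤ[X] →ₐ[ℤ] A) : ℤ[X] → A) := by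
    intro a
    have h1 : (a : ℂ) ∈ Algebra.adjoin ℤ ({ω} : Set ℂ) := a.2
    rw [Algebra.adjoin_singleton_eq_range_aeval] at h1
    obtain ⟨E, hE⟩ := h1
    exact ⟨E, Subtype.ext (by rw [← hE]; exact hcoeaeval E)⟩
  -- instances on A
  have hfin : Module.Finite ℤ A := Module.Finite.iff_fg.mpr hint.fg_adjoin_singleton
  have hnoeth : IsNoetherianRing A := Algebra.FiniteType.isNoetherianRing ℤ A
  -- the reduction homomorphism ρ : A →+* ZMod p with ρ(ω) = 1
  set χ : ℤ[X] →+* ZMod p := Polynomial.eval₂RingHom (Int.castRingHom (ZMod p)) 1 with hχ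
  have hχap : ∀ E : ℤ[X], χ E = ((E.eval 1 : ℤ) : ZMod p) := by
    intro E
    rw [hχ, coe_eval₂RingHom, eval₂_at_one]
    rfl
  have hmincyc : cyclotomic p ℤ = minpoly ℤ ω := cyclotomic_eq_minpoly hω hppos
  set φ : ℤ[X] →+* A := (aeval ωA : ℤ[X] →ₐ[ℤ] A).toRingHom with hφ
  have hφap : ∀ E : ℤ[X], φ E = aeval ωA E := fun _ => rfl
  have hχcyc : χ (cyclotomic p ℤ) = 0 := by
    rw [hχap, Polynomial.eval_one_cyclotomic_prime]
    simp
  have hkerle : ∀ E ∈ RingHom.ker φ, E ∈ RingHom.ker χ := by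
    intro E hE
    rw [RingHom.mem_ker] at hE ⊢
    have h1 : aeval ω E = 0 := by
      rw [← hcoeaeval E, ← hφap, hE]
      simp
    have h2 : minpoly ℤ ω ∣ E := minpoly.isIntegrallyClosed_dvd hint h1
    rw [← hmincyc] at h2
    obtain ⟨B, hB⟩ := h2
    rw [hB, map_mul, hχcyc, zero_mul]
  set ρ : A →+* ZMod p :=
    (Ideal.Quotient.lift (RingHom.ker φ) χ (fun E hE => RingHom.mem_ker.mp (hkerle E hE))).comp
      (RingHom.quotientKerEquivOfSurjective (f := φ) hsurj).symm.toRingHom with hρ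
  have hρae : ∀ E : ℤ[X], ρ (aeval ωA E) = ((E.eval 1 : ℤ) : ZMod p) := by
    intro E
    have h1 : (RingHom.quotientKerEquivOfSurjective (f := φ) hsurj) (Ideal.Quotient.mk _ E) = φ E :=
      RingHom.kerLift_mk φ E
    have h2 : (RingHom.quotientKerEquivOfSurjective (f := φ) hsurj).symm (φ E)
        = Ideal.Quotient.mk _ E := by
      rw [← h1, RingEquiv.symm_apply_apply]
    rw [hρ, RingHom.comp_apply, ← hφap, RingEquiv.toRingHom_eq_coe, RingHom.coe_coe, h2,
      Ideal.Quotient.lift_mk, hχap]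
  have hρω : ρ ωA = 1 := by
    have h1 := hρae X
    simpa using h1
  -- π = 1 - ω
  set π : A := 1 - ωA with hπ
  have hωA1 : ωA ≠ 1 := by
    intro h
    exact hω.ne_one hp1 (by simpa [hωAdef, Subtype.ext_iff] using h)
  have hπ0 : π ≠ 0 := sub_ne_zero.mpr (Ne.symm hωA1)
  have hρπ : ρ π = 0 := by rw [hπ, map_sub, hρω, map_one, sub_self]
  have hπu : ¬ IsUnit π := by
    intro h
    have h2 := h.map ρ
    rw [hρπ] at h2
    exact h2.ne_zero rfl
  -- the integral vectors d j
  set Rp : Fin n → ℤ[X] := fun j => C (∏ k ∈ Finset.univ.erase j, b k) * Q j with hRp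
  set N : ℤ := ∏ k, b k with hN
  have hNne : (N : ℂ) ≠ 0 := by
    rw [hN]
    push_cast
    exact Finset.prod_ne_zero_iff.mpr (fun k _ => by exact_mod_cast Int.cast_ne_zero.mpr (hb k))
  set d : Fin n → A := fun j => aeval ωA (Rp j) with hd
  have hdco : ∀ j, ((d j : A) : ℂ) = (N : ℂ) * (c j : ℂ) := by
    intro j
    have h2 : ((d j : A) : ℂ) = ((∏ k ∈ Finset.univ.erase j, b k : ℤ) : ℂ) * (((b j : ℤ) : ℂ) * (c j : ℂ)) := by
      rw [hd, hcoeaeval, hRp]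
      simp only [map_mul, aeval_C, algebraMap_int_eq, eq_intCast, map_intCast]
      rw [haQ j]
    rw [h2, ← mul_assoc, ← Int.cast_mul, Finset.prod_erase_mul _ _ (Finset.mem_univ j), ← hN]
  have hdne : ∃ j, d j ≠ 0 := by
    have h1 : ∃ j, c j ≠ 0 := by
      by_contra h
      push_neg at h
      exact hc0 (funext h)
    obtain ⟨j, hj⟩ := h1
    refine ⟨j, fun h0 => ?_⟩
    have h2 := hdco j
    rw [h0] at h2
    simp only [ZeroMemClass.coe_zero] at h2
    have h3 : (c j : ℂ) ≠ 0 := fun h4 => hj (Subtype.ext h4)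
    exact h3 (by
      rcases mul_eq_zero.mp h2.symm with h | h
      · exact absurd h hNne
      · exact h)
  have hkerA : ∀ i, ∑ j, ωA ^ ((x i).val * (ξ j).val) * d j = 0 := by
    intro i
    apply Subtype.ext
    have h1 : ((∑ j, ωA ^ ((x i).val * (ξ j).val) * d j : A) : ℂ)
        = ∑ j, ω ^ ((x i).val * (ξ j).val) * ((d j : A) : ℂ) := by
      push_cast
      rfl
    rw [h1]
    have h2 : ∀ j, ω ^ ((x i).val * (ξ j).val) * ((d j : A) : ℂ)
        = (N : ℂ) * (ω ^ ((x i).val * (ξ j).val) * (c j : ℂ)) := by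
      intro j
      rw [hdco j]
      ring
    rw [Finset.sum_congr rfl (fun j _ => h2 j), ← Finset.mul_sum, hker i, mul_zero]
    rfl
  -- divide out the largest power of π
  obtain ⟨j0, hj0⟩ := hdne
  obtain ⟨B, hB⟩ := FiniteMultiplicity.of_not_isUnit hπu hj0
  have hex : ∃ m, ¬ ∀ j, π ^ m ∣ d j := ⟨B + 1, fun hall => hB (hall j0)⟩
  set m1 := Nat.find hex with hm1
  have hm1pos : 0 < m1 := by
    rcases Nat.eq_zero_or_pos m1 with h | h
    · exfalso
      have := Nat.find_spec hex
      rw [← hm1, h] at this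
      exact this (fun j => by simp)
    · exact h
  have hall : ∀ j, π ^ (m1 - 1) ∣ d j := by
    have h := Nat.find_min hex (show m1 - 1 < m1 by omega)
    push_neg at h
    exact h
  have hnotall : ¬ ∀ j, π ^ m1 ∣ d j := Nat.find_spec hex
  choose e he using hall
  have hnot : ∃ j, ¬ π ∣ e j := by
    by_contra h
    push_neg at h
    apply hnotall
    intro j
    obtain ⟨u, hu⟩ := h j
    refine ⟨u, ?_⟩
    calc d j = π ^ (m1 - 1) * (π * u) := by rw [he j, hu]
      _ = π ^ (m1 - 1) * π * u := by ring
      _ = π ^ (m1 - 1 + 1) * u := by rw [pow_succ]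
      _ = π ^ m1 * u := by rw [show m1 - 1 + 1 = m1 by omega]
  obtain ⟨js, hjs⟩ := hnot
  have hkerE : ∀ i, ∑ j, ωA ^ ((x i).val * (ξ j).val) * e j = 0 := by
    intro i
    have h1 : π ^ (m1 - 1) * (∑ j, ωA ^ ((x i).val * (ξ j).val) * e j) = 0 := by
      rw [Finset.mul_sum, ← hkerA i]
      apply Finset.sum_congr rfl
      intro j _
      rw [he j]
      ring
    exact (mul_eq_zero.mp h1).resolve_left (pow_ne_zero _ hπ0)
  -- kernel of ρ consists of multiples of π
  have hπp : π ∣ (p : A) := by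
    have hcyc0 : aeval ωA (cyclotomic p ℤ) = 0 := by
      apply Subtype.ext
      rw [hcoeaeval, hmincyc]
      simpa using minpoly.aeval ℤ ω
    have hsum0 : ∑ i ∈ Finset.range p, ωA ^ i = 0 := by
      rw [← hcyc0, cyclotomic_prime]
      rw [map_sum]
      simp
    have hsum : (p : A) = ∑ i ∈ Finset.range p, ((1 : A) - ωA ^ i) := by
      rw [Finset.sum_sub_distrib, hsum0, sub_zero, Finset.sum_const, Finset.card_range]
      simp
    rw [hsum]
    apply Finset.dvd_sum
    intro i _
    have hgeo := geom_sum_mul ωA i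
    exact ⟨∑ k ∈ Finset.range i, ωA ^ k, by rw [hπ]; linear_combination hgeo⟩
  have hkerρ : ∀ a : A, ρ a = 0 → π ∣ a := by
    intro a ha
    obtain ⟨E, hE⟩ := hsurj a
    have hE' : aeval ωA E = a := hE
    have hev : ((p : ℕ) : ℤ) ∣ E.eval 1 := by
      have h1 := hρae E
      rw [hE', ha] at h1
      exact (ZMod.intCast_zmod_eq_zero_iff_dvd _ p).mp h1.symm
    obtain ⟨t, ht⟩ := hev
    obtain ⟨G, hG⟩ := Polynomial.X_sub_C_dvd_sub_C_eval (a := (1:ℤ)) (p := E)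
    have hEeq : E = (X - C 1) * G + C (E.eval 1) := by rw [← hG]; ring
    rw [← hE', hEeq, map_add, map_mul]
    apply dvd_add
    · apply Dvd.dvd.mul_right
      have h2 : aeval ωA (X - C 1 : ℤ[X]) = ωA - 1 := by simp
      rw [h2]
      exact ⟨-1, by rw [hπ]; ring⟩
    · rw [ht, aeval_C, map_mul]
      have h3 : algebraMap ℤ A ((p : ℕ) : ℤ) = (p : A) := by push_cast; rfl
      rw [h3] at *
      exact Dvd.dvd.mul_right hπp _
  have hρjs : ρ (e js) ≠ 0 := fun h => hjs (hkerρ _ h)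
  -- the polynomial argument
  set QA : Polynomial A := ∑ j, Polynomial.C (e j) * X ^ (ξ j).val with hQA
  set PA : Polynomial A := ∏ i, (X - Polynomial.C (ωA ^ (x i).val)) with hPA
  have hPAmonic : PA.Monic := monic_prod_of_monic _ _ (fun i _ => monic_X_sub_C _)
  have hQroot : ∀ i, QA.eval (ωA ^ (x i).val) = 0 := by
    intro i
    rw [hQA, Polynomial.eval_finset_sum]
    simp only [Polynomial.eval_mul, Polynomial.eval_C, Polynomial.eval_pow, Polynomial.eval_X]
    rw [← hkerE i]
    apply Finset.sum_congr rfl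
    intro j _
    rw [← pow_mul, mul_comm ((x i).val) ((ξ j).val), pow_mul]
    ring
  have hvalinj : Function.Injective (ZMod.val : ZMod p → ℕ) := by
    intro a b h
    have := ZMod.natCast_rightInverse (n := p)
    rw [← this a, ← this b, h]
  have hrootsne : ∀ i i' : Fin n, i ≠ i' → ω ^ (x i).val ≠ ω ^ (x i').val := by
    intro i i' hne h
    exact hne (hx (hvalinj (hω.pow_inj (ZMod.val_lt _) (ZMod.val_lt _) h)))
  have hdvdC : PA.map A.val.toRingHom ∣ QA.map A.val.toRingHom := by
    rw [hPA, Polynomial.map_prod]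
    have h1 : ∀ i : Fin n, (X - Polynomial.C (ωA ^ (x i).val)).map A.val.toRingHom
        = X - Polynomial.C (ω ^ (x i).val) := by
      intro i
      rw [Polynomial.map_sub, Polynomial.map_X, Polynomial.map_C]
      push_cast
      rfl
    rw [Finset.prod_congr rfl (fun i _ => h1 i)]
    apply Finset.prod_dvd_of_coprime
    · intro i _ i' _ hne
      exact isCoprime_X_sub_C_of_isUnit_sub (isUnit_iff_ne_zero.mpr (sub_ne_zero.mpr (hrootsne i i' hne)))
    · intro i _
      rw [Polynomial.dvd_iff_isRoot, Polynomial.IsRoot]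
      have h2 : (ω ^ (x i).val) = A.val.toRingHom (ωA ^ (x i).val) := by push_cast; rfl
      rw [h2, Polynomial.eval_map, Polynomial.eval₂_at_apply, hQroot i, map_zero]
  have hPAdvd : PA ∣ QA := by
    have h0 : QA.map A.val.toRingHom %ₘ PA.map A.val.toRingHom = 0 :=
      (Polynomial.modByMonic_eq_zero_iff_dvd (hPAmonic.map _)).mpr hdvdC
    have h1 : (QA %ₘ PA).map A.val.toRingHom = 0 := by
      rw [Polynomial.map_modByMonic _ hPAmonic, h0]
    have h2 : QA %ₘ PA = 0 := by
      rwa [Polynomial.map_eq_zero_iff Subtype.val_injective] at h1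
    exact (Polynomial.modByMonic_eq_zero_iff_dvd hPAmonic).mp h2
  have hdvdρ : ((X : (ZMod p)[X]) - 1) ^ n ∣ QA.map ρ := by
    have h1 : PA.map ρ = (X - 1) ^ n := by
      rw [hPA, Polynomial.map_prod]
      have h2 : ∀ i : Fin n, (X - Polynomial.C (ωA ^ (x i).val)).map ρ = X - 1 := by
        intro i
        rw [Polynomial.map_sub, Polynomial.map_X, Polynomial.map_C, map_pow, hρω, one_pow, map_one]
      rw [Finset.prod_congr rfl (fun i _ => h2 i), Finset.prod_const, Finset.card_univ,
        Fintype.card_fin]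
    obtain ⟨R, hR⟩ := hPAdvd
    exact ⟨R.map ρ, by rw [← h1, hR, Polynomial.map_mul]⟩
  set Qρ := QA.map ρ with hQρdef
  have hQρ : Qρ = ∑ j, Polynomial.C (ρ (e j)) * X ^ (ξ j).val := by
    rw [hQρdef, hQA, Polynomial.map_sum]
    apply Finset.sum_congr rfl
    intro j _
    rw [Polynomial.map_mul, Polynomial.map_C, Polynomial.map_pow, Polynomial.map_X]
  have hξval : ∀ j j' : Fin n, j ≠ j' → (ξ j).val ≠ (ξ j').val := by
    intro j j' hne h
    exact hne (hξ (hvalinj h))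
  have hcoeffjs : Qρ.coeff ((ξ js).val) = ρ (e js) := by
    rw [hQρ, Polynomial.finset_sum_coeff]
    rw [Finset.sum_eq_single js]
    · rw [Polynomial.coeff_C_mul, Polynomial.coeff_X_pow, if_pos rfl, mul_one]
    · intro j _ hne
      rw [Polynomial.coeff_C_mul, Polynomial.coeff_X_pow, if_neg (hξval js j (Ne.symm hne)), mul_zero]
    · intro h
      exact absurd (Finset.mem_univ js) h
  have hQρ0 : Qρ ≠ 0 := fun h => hρjs (by rw [← hcoeffjs, h, Polynomial.coeff_zero])
  have hdegQρ : Qρ.natDegree < p := by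
    rw [Polynomial.natDegree_lt_iff_degree_lt hQρ0]
    rw [Polynomial.degree_lt_iff_coeff_zero]
    intro m hm
    rw [hQρ, Polynomial.finset_sum_coeff]
    apply Finset.sum_eq_zero
    intro j _
    rw [Polynomial.coeff_C_mul, Polynomial.coeff_X_pow, if_neg, mul_zero]
    intro h
    have h1 := ZMod.val_lt (ξ j)
    have h3 : p ≤ m := by exact_mod_cast hm
    omega
  have hsuppQρ : Qρ.support.card ≤ n := by
    have h1 : Qρ.support ⊆ Finset.image (fun j => (ξ j).val) Finset.univ := by
      intro m hm
      rw [Polynomial.mem_support_iff] at hm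
      by_contra hmem
      apply hm
      rw [hQρ, Polynomial.finset_sum_coeff]
      apply Finset.sum_eq_zero
      intro j _
      rw [Polynomial.coeff_C_mul, Polynomial.coeff_X_pow, if_neg, mul_zero]
      intro h
      exact hmem (Finset.mem_image.mpr ⟨j, Finset.mem_univ j, h.symm⟩)
    calc Qρ.support.card ≤ _ := Finset.card_le_card h1
      _ ≤ Finset.univ.card := Finset.card_image_le
      _ = n := by simp
  exact lemA p n Qρ hQρ0 hdegQρ hsuppQρ hdvdρ

open Complex in
lemma orth (p : ℕ) [hp : Fact p.Prime] {ωp ωm : ℂ}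
    (hωp : IsPrimitiveRoot ωp p) (hm : ωm = ωp⁻¹) (s t : ZMod p) :
    ∑ x : ZMod p, ωp ^ (s.val * x.val) * ωm ^ (t.val * x.val)
      = if s = t then (p : ℂ) else 0 := by
  have hsum : ∀ ζ : ℂ, ∑ x : ZMod p, ζ ^ (x.val) = ∑ i ∈ Finset.range p, ζ ^ i := by
    intro ζ
    refine Finset.sum_nbij' (fun x => x.val) (fun i => (i : ZMod p)) ?_ ?_ ?_ ?_ ?_
    · intro x _
      exact Finset.mem_range.mpr (ZMod.val_lt x)
    · intro i _
      exact Finset.mem_univ _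
    · intro x _
      exact (ZMod.natCast_rightInverse x)
    · intro i hi
      exact ZMod.val_cast_of_lt (Finset.mem_range.mp hi)
    · intro x _
      rfl
  set ζ : ℂ := ωp ^ s.val * ωm ^ t.val with hζ
  have hterm : ∀ x : ZMod p, ωp ^ (s.val * x.val) * ωm ^ (t.val * x.val) = ζ ^ x.val := by
    intro x
    rw [hζ, mul_pow, ← pow_mul, ← pow_mul]
  rw [Finset.sum_congr rfl (fun x _ => hterm x), hsum ζ]
  have hωpne : ωp ≠ 0 := fun h => by
    have := hωp.pow_eq_one
    rw [h, zero_pow hp.out.pos.ne'] at this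
    exact zero_ne_one this
  by_cases hst : s = t
  · subst hst
    have hζ1 : ζ = 1 := by
      rw [hζ, hm, inv_pow, mul_inv_eq_one₀ (pow_ne_zero _ hωpne)]
    rw [if_pos rfl, hζ1]
    simp
  · rw [if_neg hst]
    have hζp : ζ ^ p = 1 := by
      rw [hζ, mul_pow, ← pow_mul, ← pow_mul, mul_comm (s.val) p, mul_comm (t.val) p,
        pow_mul, pow_mul, hωp.pow_eq_one, hm, inv_pow, hωp.pow_eq_one]
      simp
    have hζ1 : ζ ≠ 1 := by
      intro h1
      rw [hζ, hm, inv_pow, mul_inv_eq_one₀ (pow_ne_zero _ hωpne)] at h1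
      exact hst (ZMod.val_injective p (hωp.pow_inj (ZMod.val_lt s) (ZMod.val_lt t) h1))
    have h2 := geom_sum_mul ζ p
    rw [hζp, sub_self] at h2
    rcases mul_eq_zero.mp h2 with h | h
    · exact h
    · exact absurd (sub_eq_zero.mp h) hζ1

open Complex in
/-- Statement 2.13: for `p` prime, nonempty `S ⊆ ℤ/pℤ` and `ψ : ℤ/pℤ → ℂ`, the space
`L*(S) = {f : f = ψ·a, supp â ⊆ S}` has dimension `min{|S|, |supp ψ|}`. -/
theorem dim_Lstar (p : ℕ) [Fact p.Prime]
    (S : Finset (ZMod p)) (hS : S.Nonempty) (ψ : ZMod p → ℂ) :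
    Module.finrank ℂ (Submodule.span ℂ
        {f : ZMod p → ℂ | ∃ a : ZMod p → ℂ,
          (∀ ξ : ZMod p, ξ ∉ S →
            (∑ x : ZMod p, a x *
              Complex.exp (-2 * Real.pi * I * (ξ.val : ℂ) * (x.val : ℂ) / p)) = 0) ∧
          f = fun x => ψ x * a x}) =
      min S.card {x : ZMod p | ψ x ≠ 0}.ncard := by
  classical
  have hp1 : 1 < p := (Fact.out (p := p.Prime)).one_lt
  have hpc : (p : ℂ) ≠ 0 := Nat.cast_ne_zero.mpr (by omega)
  set ωp : ℂ := Complex.exp (2 * Real.pi * Complex.I / p) with hωpdef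
  have hωp : IsPrimitiveRoot ωp p := Complex.isPrimitiveRoot_exp p (by omega)
  set ωm : ℂ := ωp⁻¹ with hωmdef
  have hωm : IsPrimitiveRoot ωm p := hωp.inv
  have hexp : ∀ (ξ x : ZMod p),
      Complex.exp (-2 * Real.pi * I * (ξ.val : ℂ) * (x.val : ℂ) / p) = ωm ^ (ξ.val * x.val) := by
    intro ξ x
    have h1 : ωm = Complex.exp (-(2 * Real.pi * Complex.I / p)) := by
      rw [hωmdef, hωpdef, Complex.exp_neg]
    rw [h1, ← Complex.exp_nat_mul]
    congr 1
    push_cast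
    ring
  set T : Finset (ZMod p) := Finset.univ.filter (fun x => ψ x ≠ 0) with hT
  have hTset : {x : ZMod p | ψ x ≠ 0} = (↑T : Set (ZMod p)) := by
    ext x
    simp [hT]
  rw [hTset, Set.ncard_coe_finset]
  set e : ZMod p → ZMod p → ℂ := fun s x => ωp ^ (s.val * x.val) with he
  set g : ↥S → (ZMod p → ℂ) := fun s => fun x => ψ x * e (s : ZMod p) x with hg
  -- full DFT matrix is invertible
  set W : Matrix (ZMod p) (ZMod p) ℂ := Matrix.of fun ξ x => ωm ^ (ξ.val * x.val) with hW
  have hWdet : W.det ≠ 0 := by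
    have hcard : Fintype.card (ZMod p) = p := ZMod.card p
    set eqv : Fin p ≃ ZMod p := (Fintype.equivFinOfCardEq hcard).symm with heqv
    have h1 := cheb (fun i => eqv i) (fun i => eqv i) eqv.injective eqv.injective hωm
    rw [← Matrix.det_submatrix_equiv_self eqv W]
    exact h1
  have hWinj : ∀ b : ZMod p → ℂ, W.mulVec b = 0 → b = 0 := by
    intro b hb
    by_contra hb0
    exact hWdet ((Matrix.exists_mulVec_eq_zero_iff).mp ⟨b, hb0, hb⟩)
  have horth : ∀ (t s : ZMod p), (∑ x : ZMod p, ωm ^ (t.val * x.val) * e s x)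
      = if s = t then (p : ℂ) else 0 := by
    intro t s
    rw [← orth p hωp hωmdef s t]
    apply Finset.sum_congr rfl
    intro x _
    rw [he]
    ring
  -- the defining set equals the span of the functions g s
  have hVeq : {f : ZMod p → ℂ | ∃ a : ZMod p → ℂ,
      (∀ ξ : ZMod p, ξ ∉ S →
        (∑ x : ZMod p, a x *
          Complex.exp (-2 * Real.pi * I * (ξ.val : ℂ) * (x.val : ℂ) / p)) = 0) ∧
      f = fun x => ψ x * a x} = (↑(Submodule.span ℂ (Set.range g)) : Set (ZMod p → ℂ)) := by
    ext f
    simp only [Set.mem_setOf_eq, SetLike.mem_coe]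
    constructor
    · rintro ⟨a, ha, rfl⟩
      set c : ↥S → ℂ := fun s => (∑ x : ZMod p, ωm ^ ((s : ZMod p).val * x.val) * a x) / p with hc
      have htrans : ∀ ξ : ZMod p, ξ ∉ S → (∑ x : ZMod p, ωm ^ (ξ.val * x.val) * a x) = 0 := by
        intro ξ hξ
        rw [← ha ξ hξ]
        apply Finset.sum_congr rfl
        intro x _
        rw [hexp]
        ring
      set b : ZMod p → ℂ := fun x => a x - ∑ s : ↥S, c s * e (s : ZMod p) x with hb
      have hWb : W.mulVec b = 0 := by
        funext ξ
        show W.mulVec b ξ = 0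
        have h3 : ∀ x, W ξ x * b x
            = ωm ^ (ξ.val * x.val) * a x
              - ∑ s : ↥S, c s * (ωm ^ (ξ.val * x.val) * e (s : ZMod p) x) := by
          intro x
          rw [hW, hb]
          simp only [Matrix.of_apply]
          rw [mul_sub, Finset.mul_sum]
          congr 1
          apply Finset.sum_congr rfl
          intro s _
          ring
        have hWb1 : W.mulVec b ξ
            = (∑ x : ZMod p, ωm ^ (ξ.val * x.val) * a x)
              - ∑ s : ↥S, c s * ∑ x : ZMod p, ωm ^ (ξ.val * x.val) * e (s : ZMod p) x := by
          calc W.mulVec b ξ = ∑ x : ZMod p, W ξ x * b x := rfl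
            _ = ∑ x : ZMod p, (ωm ^ (ξ.val * x.val) * a x
                - ∑ s : ↥S, c s * (ωm ^ (ξ.val * x.val) * e (s : ZMod p) x)) :=
              Finset.sum_congr rfl (fun x _ => h3 x)
            _ = _ := by
              rw [Finset.sum_sub_distrib]
              congr 1
              rw [Finset.sum_comm]
              apply Finset.sum_congr rfl
              intro s _
              rw [Finset.mul_sum]
        by_cases hξS : ξ ∈ S
        · have h4 : (∑ x : ZMod p, ωm ^ (ξ.val * x.val) * a x) = p * c ⟨ξ, hξS⟩ := by
            rw [hc]
            field_simp
          have h6 : ∑ s : ↥S, c s * (∑ x : ZMod p, ωm ^ (ξ.val * x.val) * e (s : ZMod p) x)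
              = c ⟨ξ, hξS⟩ * p := by
            rw [Finset.sum_congr rfl (fun s _ => by rw [horth ξ s])]
            rw [Finset.sum_eq_single (⟨ξ, hξS⟩ : ↥S)]
            · rw [if_pos rfl]
            · intro s _ hne
              rw [if_neg (fun h => hne (Subtype.ext h)), mul_zero]
            · intro h
              exact absurd (Finset.mem_univ _) h
          rw [hWb1, h4, h6]
          ring
        · rw [hWb1, htrans ξ hξS]
          rw [Finset.sum_congr rfl (fun s _ => by
            rw [horth ξ s, if_neg (fun h => hξS (by rw [← h]; exact s.2)), mul_zero])]
          simp
      have hbeq : b = 0 := hWinj b hWb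
      have haeq : ∀ x, a x = ∑ s : ↥S, c s * e (s : ZMod p) x := by
        intro x
        have h7 := congrFun hbeq x
        rw [hb] at h7
        exact sub_eq_zero.mp h7
      have hfeq : (fun x => ψ x * a x) = ∑ s : ↥S, c s • g s := by
        funext x
        rw [haeq x, Finset.mul_sum, Finset.sum_apply]
        apply Finset.sum_congr rfl
        intro s _
        rw [Pi.smul_apply, smul_eq_mul, hg]
        ring
      rw [hfeq]
      exact Submodule.sum_mem _ (fun s _ =>
        Submodule.smul_mem _ _ (Submodule.subset_span ⟨s, rfl⟩))
    · intro hf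
      obtain ⟨c, hcf⟩ := (Submodule.mem_span_range_iff_exists_fun ℂ).mp hf
      refine ⟨fun x => ∑ s : ↥S, c s * e (s : ZMod p) x, ?_, ?_⟩
      · intro ξ hξ
        have h1 : ∀ x : ZMod p, (∑ s : ↥S, c s * e (s : ZMod p) x)
            * Complex.exp (-2 * Real.pi * I * (ξ.val : ℂ) * (x.val : ℂ) / p)
            = ∑ s : ↥S, c s * (ωm ^ (ξ.val * x.val) * e (s : ZMod p) x) := by
          intro x
          rw [hexp, Finset.sum_mul]
          apply Finset.sum_congr rfl
          intro s _
          ring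
        rw [Finset.sum_congr rfl (fun x _ => h1 x), Finset.sum_comm]
        apply Finset.sum_eq_zero
        intro s _
        rw [← Finset.mul_sum, horth ξ s, if_neg (fun h => hξ (by rw [← h]; exact s.2)), mul_zero]
      · funext x
        rw [← congrFun hcf x, Finset.sum_apply, Finset.mul_sum]
        apply Finset.sum_congr rfl
        intro s _
        rw [Pi.smul_apply, smul_eq_mul, hg]
        ring
  rw [hVeq, Submodule.span_eq]
  -- identify the span with the column space of a matrix
  set Bm : Matrix (ZMod p) ↥S ℂ := Matrix.of fun x s => ψ x * e (s : ZMod p) x with hBm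
  have hrank1 : Bm.rank = Module.finrank ℂ (Submodule.span ℂ (Set.range g)) := by
    rw [Matrix.rank_eq_finrank_span_cols]
    rfl
  rw [← hrank1]
  -- upper bounds
  have hrankS : Bm.rank ≤ S.card := by
    have h1 := Matrix.rank_le_card_width Bm
    rwa [Fintype.card_coe] at h1
  set Em : Matrix (ZMod p) ↥T ℂ := Matrix.of fun x t => if x = (t : ZMod p) then 1 else 0 with hEm
  set Cm : Matrix ↥T ↥S ℂ := Matrix.of fun t s => ψ (t : ZMod p) * e (s : ZMod p) (t : ZMod p)
    with hCm
  have hfact : Bm = Em * Cm := by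
    ext x s
    rw [Matrix.mul_apply]
    simp only [hBm, hEm, hCm, Matrix.of_apply]
    by_cases hx : ψ x = 0
    · rw [hx, zero_mul]
      symm
      apply Finset.sum_eq_zero
      intro t _
      rcases eq_or_ne x (t : ZMod p) with h | h
      · rw [if_pos h, one_mul, ← h, hx, zero_mul]
      · rw [if_neg h, zero_mul]
    · have hxT : x ∈ T := by simp [hT, hx]
      rw [Finset.sum_eq_single (⟨x, hxT⟩ : ↥T)]
      · rw [if_pos rfl, one_mul]
      · intro t _ hne
        rw [if_neg (fun h => hne (Subtype.ext h.symm)), zero_mul]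
      · intro h
        exact absurd (Finset.mem_univ _) h
  have hrankT : Bm.rank ≤ T.card := by
    rw [hfact]
    have h1 := Matrix.rank_mul_le_right Em Cm
    have h2 := Matrix.rank_le_card_height Cm
    rw [Fintype.card_coe] at h2
    omega
  -- lower bound
  set m := min S.card T.card with hm
  obtain ⟨u⟩ : Nonempty (Fin m ↪ ↥S) := by
    rw [Function.Embedding.nonempty_iff_card_le, Fintype.card_fin, Fintype.card_coe]
    omega
  obtain ⟨v⟩ : Nonempty (Fin m ↪ ↥T) := by
    rw [Function.Embedding.nonempty_iff_card_le, Fintype.card_fin, Fintype.card_coe]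
    omega
  set Ch : Matrix (Fin m) (Fin m) ℂ :=
    Matrix.of fun i j => ωp ^ (((v i : ZMod p)).val * ((u j : ZMod p)).val) with hCh
  have hChdet : Ch.det ≠ 0 :=
    cheb (fun i => (v i : ZMod p)) (fun j => (u j : ZMod p))
      (fun i i' h => v.injective (Subtype.ext h)) (fun j j' h => u.injective (Subtype.ext h)) hωp
  set Dg : Matrix (Fin m) (Fin m) ℂ := Matrix.diagonal (fun i => ψ (v i : ZMod p)) with hDg
  set Sq : Matrix (Fin m) (Fin m) ℂ := Dg * Ch with hSq
  have hψv : ∀ i, ψ (v i : ZMod p) ≠ 0 := by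
    intro i
    have h1 : (v i : ZMod p) ∈ Finset.filter (fun x => ψ x ≠ 0) Finset.univ := (v i).2
    exact (Finset.mem_filter.mp h1).2
  have hSqdet : Sq.det ≠ 0 := by
    rw [hSq, Matrix.det_mul, hDg, Matrix.det_diagonal]
    exact mul_ne_zero (Finset.prod_ne_zero_iff.mpr (fun i _ => hψv i)) hChdet
  have hSqrank : Sq.rank = m := by
    rw [Matrix.rank_of_isUnit Sq ((Matrix.isUnit_iff_isUnit_det Sq).mpr
      (isUnit_iff_ne_zero.mpr hSqdet)), Fintype.card_fin]
  set E1 : Matrix (Fin m) (ZMod p) ℂ := Matrix.of fun i x => if x = (v i : ZMod p) then 1 else 0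
    with hE1
  set E2 : Matrix ↥S (Fin m) ℂ := Matrix.of fun s j => if s = u j then 1 else 0 with hE2
  have hE1B : ∀ i s, (E1 * Bm) i s = Bm (v i : ZMod p) s := by
    intro i s
    rw [Matrix.mul_apply]
    rw [Finset.sum_eq_single ((v i : ZMod p))]
    · simp [hE1]
    · intro x _ hne
      simp [hE1, hne]
    · intro h
      exact absurd (Finset.mem_univ _) h
  have hSq2 : Sq = (E1 * Bm) * E2 := by
    ext i j
    rw [Matrix.mul_apply, Finset.sum_eq_single (u j)]
    · rw [hE1B]
      have h9 : E2 (u j) j = 1 := by simp [hE2]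
      rw [h9, mul_one, hSq, Matrix.diagonal_mul, hBm, hCh]
      simp only [Matrix.of_apply]
      rw [mul_comm ((v i : ZMod p)).val ((u j : ZMod p)).val]
    · intro s _ hne
      simp [hE2, hne]
    · intro h
      exact absurd (Finset.mem_univ _) h
  have hrankm : m ≤ Bm.rank := by
    calc m = Sq.rank := hSqrank.symm
      _ ≤ (E1 * Bm).rank := by
          rw [hSq2]
          exact Matrix.rank_mul_le_left _ _
      _ ≤ Bm.rank := Matrix.rank_mul_le_right _ _
  exact Nat.le_antisymm (le_min hrankS hrankT) hrankm
end
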